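/- arXiv:2306.09745 — 4 statements merged into one kernel-verified Lean document; each statement's English description precedes it below -/
import Mathlib

section
/- Let F : C → D be an exact, fully faithful, k-linear functor between k-linear abelian categories in which every object has finite length. Then the following are equivalent: (i) F sends simple objects to simple objects; (ii) for every object X of C, every subobject of F(X) is the image of F(Y) → F(X) for some subobject Y of X. -/
open CategoryTheory CategoryTheory.Limits

universe v₁ u₁ v₂ u₂

/-- `W` is a subquotient of `Z`: a quotient of a subobject of `Z`. -/
def IsSubquotient {C : Type u₁} [Category.{v₁} C] (W Z : C) : Prop :=
  ∃ (S : C) (i : S ⟶ Z) (p : S ⟶ W), Mono i ∧ Epi p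

namespace SimpleLiftAux

open CategoryTheory.Abelian

attribute [local instance] CategoryTheory.Abelian.Pseudoelement.objectToSort
  CategoryTheory.Abelian.Pseudoelement.homToFun

variable {C : Type u₁} [Category.{v₁} C] [Abelian C]

/-- `A` is a proper quotient of `B`. -/
def ProperQuot (A B : C) : Prop := ∃ q : B ⟶ A, Epi q ∧ ¬ Mono q

lemma acc_properQuot (hN : ∀ X : C, IsNoetherianObject X) (X : C) :
    Acc (ProperQuot (C := C)) X := by
  have key : ∀ (K : Subobject X) (X' : C) (p : X ⟶ X'), Epi p →
      kernelSubobject p = K → Acc (ProperQuot (C := C)) X' := by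
    intro K
    refine (haveI := hN X; wellFounded_gt (α := Subobject X)).induction
      (C := fun K => ∀ (X' : C) (p : X ⟶ X'), Epi p →
        kernelSubobject p = K → Acc (ProperQuot (C := C)) X') K ?_
    intro K IH X' p hp hK
    constructor
    rintro X'' ⟨q, hq, hqm⟩
    haveI := hp; haveI := hq
    have hlt : K < kernelSubobject (p ≫ q) := by
      rw [← hK]
      refine lt_of_le_of_ne (kernelSubobject_comp_le p q) ?_
      intro h
      apply hqm
      -- the kernel of `p ≫ q` already dies under `p`
      have harr : (kernelSubobject (p ≫ q)).arrow ≫ p = 0 := by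
        have h2 : (Subobject.ofLE _ _ (le_of_eq h.symm)) ≫ (kernelSubobject p).arrow
            = (kernelSubobject (p ≫ q)).arrow := Subobject.ofLE_arrow _
        rw [← h2, Category.assoc, kernelSubobject_arrow_comp, comp_zero]
      refine Preadditive.mono_of_cancel_zero _ ?_
      intro T t ht
      have h2 : pullback.fst p t ≫ (p ≫ q) = 0 := by
        rw [← Category.assoc, pullback.condition, Category.assoc, ht, comp_zero]
      have h3 : pullback.fst p t ≫ p = 0 := by
        rw [← factorThruKernelSubobject_comp_arrow (p ≫ q) _ h2, Category.assoc, harr, comp_zero]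
      have h4 : pullback.snd p t ≫ t = 0 := by rw [← pullback.condition, h3]
      exact zero_of_epi_comp (pullback.snd p t) h4
    exact IH (kernelSubobject (p ≫ q)) hlt X'' (p ≫ q) inferInstance rfl
  exact key (kernelSubobject (𝟙 X)) X (𝟙 X) inferInstance rfl

variable {D : Type u₂} [Category.{v₂} D] [Abelian D]

lemma lift_of_acc (F : C ⥤ D) [F.Additive] [PreservesFiniteLimits F]
    [PreservesFiniteColimits F] [F.Full] [F.Faithful]
    (hs : ∀ X : C, Simple X → Simple (F.obj X))
    (hArt : ∀ X : C, IsArtinianObject X)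
    (X : C) (hacc : Acc (ProperQuot (C := C)) X) :
    ∀ (Z : D) (m : Z ⟶ F.obj X), Mono m →
      ∃ (Y : C) (i : Y ⟶ X), Mono i ∧ ∃ e : F.obj Y ≅ Z, e.hom ≫ m = F.map i := by
  induction hacc with
  | intro X hX IH =>
  intro Z m hm
  haveI := hm
  by_cases hzero : IsZero X
  · -- `X` is zero, hence so are `F.obj X` and `Z`.
    have hFX : IsZero (F.obj X) := by
      rw [IsZero.iff_id_eq_zero] at hzero ⊢
      rw [← F.map_id, hzero, F.map_zero]
    have hZ : IsZero Z := by
      rw [IsZero.iff_id_eq_zero, ← cancel_mono m]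
      exact hFX.eq_of_tgt _ _
    exact ⟨X, 𝟙 X, inferInstance, hFX.iso hZ, hFX.eq_of_src _ _⟩
  · haveI := hArt X
    -- pick a simple subobject `S ⊆ X` and form the quotient `Q = X/S`
    let S : C := simpleSubobject hzero
    let f : S ⟶ X := simpleSubobjectArrow hzero
    haveI : Simple S := inferInstance
    haveI : Mono f := inferInstance
    have hfne : f ≠ 0 := by
      intro hf0
      have : 𝟙 S = 0 := by rw [← cancel_mono f, hf0]; simp
      exact id_nonzero S this
    let g : X ⟶ cokernel f := cokernel.π f
    have hPQ : ProperQuot (C := C) (cokernel f) X := by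
      refine ⟨g, inferInstance, fun hmono => ?_⟩
      haveI := hmono
      exact hfne (zero_of_comp_mono g (cokernel.condition f))
    have exC : (ShortComplex.mk f g (cokernel.condition f)).Exact :=
      ShortComplex.exact_cokernel f
    have exD : ((ShortComplex.mk f g (cokernel.condition f)).map F).Exact := exC.map F
    haveI : Mono (F.map f) := inferInstance
    haveI : Epi (F.map g) := inferInstance
    haveI hmf : Mono (((ShortComplex.mk f g (cokernel.condition f)).map F).f) := by
      show Mono (F.map f); infer_instance
    let u : Z ⟶ F.obj (cokernel f) := m ≫ F.map g
    have hcw : (kernel.ι u ≫ m) ≫ F.map g = 0 := by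
      rw [Category.assoc]
      exact kernel.condition u
    let c : kernel u ⟶ F.obj S := exD.lift (kernel.ι u ≫ m) hcw
    have hcf : c ≫ F.map f = kernel.ι u ≫ m := exD.lift_f _ _
    haveI : Mono c := by
      haveI : Mono (c ≫ F.map f) := by rw [hcf]; exact mono_comp _ _
      exact mono_of_mono c (F.map f)
    haveI : Simple (F.obj S) := hs S inferInstance
    by_cases hc0 : c = 0
    · -- Case B : `Z ∩ F S = 0`, so `Z` embeds into `F (X/S)`; use full faithfulness
      have hι0 : kernel.ι u = 0 := by
        have h5 : kernel.ι u ≫ m = 0 := by rw [← hcf, hc0, zero_comp]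
        exact zero_of_comp_mono m h5
      haveI : Mono u := mono_of_kernel_ι_eq_zero u hι0
      obtain ⟨Y', i', hi', e', he'⟩ := IH (cokernel f) hPQ Z u inferInstance
      haveI := hi'
      let j : Y' ⟶ X := F.preimage (e'.hom ≫ m)
      have hjm : F.map j = e'.hom ≫ m := F.map_preimage _
      haveI : Mono j := by
        haveI : Mono (F.map j) := by rw [hjm]; exact mono_comp _ _
        exact F.mono_of_mono_map this
      exact ⟨Y', j, inferInstance, e', hjm.symm⟩
    · -- Case A : `F S ⊆ Z`
      haveI : IsIso c := isIso_of_mono_of_nonzero hc0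
      let φ : F.obj S ⟶ Z := inv c ≫ kernel.ι u
      have hφm : φ ≫ m = F.map f := by
        simp only [φ, Category.assoc, ← hcf, IsIso.inv_hom_id_assoc]
      have hφu : φ ≫ u = 0 := by
        rw [show φ ≫ u = (φ ≫ m) ≫ F.map g by simp [u], hφm, ← F.map_comp,
          cokernel.condition, F.map_zero]
      obtain ⟨Y', i', hi', e', he'⟩ := IH (cokernel f) hPQ (Abelian.image u)
        (Abelian.image.ι u) inferInstance
      haveI := hi'
      let w' : Z ⟶ F.obj Y' := Abelian.factorThruImage u ≫ e'.inv
      haveI : Epi w' := epi_comp _ _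
      have hwu : w' ≫ F.map i' = u := by
        simp only [w', Category.assoc, ← he', Iso.inv_hom_id_assoc]
        exact Abelian.image.fac u
      have hφw : φ ≫ w' = 0 := by
        have h6 : φ ≫ Abelian.factorThruImage u = 0 := by
          have := hφu
          rw [show u = Abelian.factorThruImage u ≫ Abelian.image.ι u from
            (Abelian.image.fac u).symm, ← Category.assoc] at this
          exact zero_of_comp_mono _ this
        rw [show φ ≫ w' = (φ ≫ Abelian.factorThruImage u) ≫ e'.inv by simp [w'], h6, zero_comp]
      -- pull back `i'` along `g` in `C`
      let Y : C := pullback g i'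
      let i : Y ⟶ X := pullback.fst g i'
      haveI : Mono i := inferInstance
      have hsg : f ≫ g = 0 ≫ i' := by rw [zero_comp]; exact cokernel.condition f
      let s : S ⟶ Y := pullback.lift f 0 hsg
      have hs1 : s ≫ pullback.fst g i' = f := pullback.lift_fst _ _ _
      have hs2 : s ≫ pullback.snd g i' = 0 := pullback.lift_snd _ _ _
      haveI : Mono s := by
        haveI : Mono (s ≫ pullback.fst g i') := by rw [hs1]; infer_instance
        exact mono_of_mono s (pullback.fst g i')
      haveI : Epi (pullback.snd g i') := inferInstance
      -- `s` is a kernel of `pullback.snd g i'`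
      have hker : IsLimit (KernelFork.ofι s hs2) := by
        refine KernelFork.IsLimit.ofι' s hs2 (fun {A} k hk => ?_)
        have hkg : (k ≫ pullback.fst g i') ≫ cokernel.π f = 0 := by
          rw [Category.assoc]
          show k ≫ pullback.fst g i' ≫ g = 0
          rw [pullback.condition, ← Category.assoc, hk, zero_comp]
        refine ⟨Abelian.monoLift f (k ≫ pullback.fst g i') hkg, ?_⟩
        apply pullback.hom_ext
        · rw [Category.assoc, hs1, Abelian.monoLift_comp]
        · rw [Category.assoc, hs2, comp_zero, hk]
      have exC2 : (ShortComplex.mk s (pullback.snd g i') hs2).Exact :=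
        ShortComplex.exact_of_f_is_kernel _ hker
      have exD2 : ((ShortComplex.mk s (pullback.snd g i') hs2).map F).Exact := exC2.map F
      -- build the comparison `ζ : Z ⟶ F.obj Y`
      have hcond : m ≫ F.map g = w' ≫ F.map i' := by rw [hwu]
      let ℓ : Z ⟶ pullback (F.map g) (F.map i') := pullback.lift m w' hcond
      let piso := PreservesPullback.iso F g i'
      let ζ : Z ⟶ F.obj Y := ℓ ≫ piso.inv
      have hinvfst : piso.inv ≫ F.map (pullback.fst g i') = pullback.fst _ _ := by
        rw [Iso.inv_comp_eq]
        exact (PreservesPullback.iso_hom_fst F g i').symm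
      have hinvsnd : piso.inv ≫ F.map (pullback.snd g i') = pullback.snd _ _ := by
        rw [Iso.inv_comp_eq]
        exact (PreservesPullback.iso_hom_snd F g i').symm
      have hζ1 : ζ ≫ F.map (pullback.fst g i') = m := by
        simp only [ζ, Category.assoc, hinvfst]
        exact pullback.lift_fst _ _ _
      have hζ2 : ζ ≫ F.map (pullback.snd g i') = w' := by
        simp only [ζ, Category.assoc, hinvsnd]
        exact pullback.lift_snd _ _ _
      haveI : Mono ζ := mono_of_mono_fac hζ1
      have hφζ : φ ≫ ζ = F.map s := by
        have hmono : Mono piso.hom := inferInstance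
        rw [← cancel_mono piso.hom]
        have hζp : ζ ≫ piso.hom = ℓ := by simp [ζ]
        rw [Category.assoc, hζp]
        apply pullback.hom_ext
        · calc (φ ≫ ℓ) ≫ pullback.fst (F.map g) (F.map i')
              = φ ≫ m := by rw [Category.assoc, pullback.lift_fst]
            _ = F.map f := hφm
            _ = F.map (s ≫ pullback.fst g i') := by rw [hs1]
            _ = F.map s ≫ F.map (pullback.fst g i') := F.map_comp _ _
            _ = F.map s ≫ piso.hom ≫ pullback.fst (F.map g) (F.map i') := by
                rw [PreservesPullback.iso_hom_fst]
            _ = (F.map s ≫ piso.hom) ≫ pullback.fst (F.map g) (F.map i') :=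
                (Category.assoc _ _ _).symm
        · calc (φ ≫ ℓ) ≫ pullback.snd (F.map g) (F.map i')
              = φ ≫ w' := by rw [Category.assoc, pullback.lift_snd]
            _ = 0 := hφw
            _ = F.map s ≫ F.map (pullback.snd g i') := by
                rw [← F.map_comp, hs2, F.map_zero]
            _ = F.map s ≫ piso.hom ≫ pullback.snd (F.map g) (F.map i') := by
                rw [PreservesPullback.iso_hom_snd]
            _ = (F.map s ≫ piso.hom) ≫ pullback.snd (F.map g) (F.map i') :=
                (Category.assoc _ _ _).symm
      -- `ζ` is epi, by a pseudoelement chase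
      have hcoker : cokernel.π ζ = 0 := by
        apply Pseudoelement.zero_morphism_ext
        intro b
        obtain ⟨z, hz⟩ :=
          Pseudoelement.pseudo_surjective_of_epi w' ((F.map (pullback.snd g i')) b)
        have heq : (F.map (pullback.snd g i')) b = (F.map (pullback.snd g i')) (ζ z) := by
          rw [← Pseudoelement.comp_apply, hζ2, hz]
        obtain ⟨d, hd0, hdp⟩ := Pseudoelement.sub_of_eq_image _ b (ζ z) heq
        obtain ⟨a, ha⟩ := Pseudoelement.pseudo_exact_of_exact exD2 d hd0
        have h1 : (cokernel.π ζ) (ζ z) = 0 := by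
          rw [← Pseudoelement.comp_apply, cokernel.condition]
          exact Pseudoelement.zero_apply _ _
        have h2 := hdp _ (cokernel.π ζ) h1
        have h3 : (cokernel.π ζ) d = 0 := by
          rw [← ha]
          refine (Pseudoelement.comp_apply (F.map s) (cokernel.π ζ) a).symm.trans ?_
          have h7 : F.map s ≫ cokernel.π ζ = 0 := by
            rw [← hφζ, Category.assoc, cokernel.condition, comp_zero]
          rw [h7]
          exact Pseudoelement.zero_apply _ _
        rw [← h2, h3]
      haveI : Epi ζ := Abelian.epi_of_cokernel_π_eq_zero ζ hcoker
      haveI : IsIso ζ := isIso_of_mono_of_epi ζ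
      refine ⟨Y, i, inferInstance, (asIso ζ).symm, ?_⟩
      show inv ζ ≫ m = F.map i
      rw [← hζ1, IsIso.inv_hom_id_assoc]

end SimpleLiftAux

/-- Let `F : C ⥤ D` be an exact, fully faithful, `k`-linear functor between `k`-linear
abelian categories in which every object has finite length (Noetherian and Artinian).
Then `F` sends simple objects to simple objects if and only if every subobject of `F(X)`
is the image of `F(Y) ⟶ F(X)` for some subobject `Y ⊆ X`. -/
theorem simple_to_simple_iff_subobjects_lift
    {k : Type*} [Field k]
    {C : Type u₁} [Category.{v₁} C] [Abelian C] [Linear k C]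
    {D : Type u₂} [Category.{v₂} D] [Abelian D] [Linear k D]
    (hC : ∀ X : C, IsNoetherianObject X ∧ IsArtinianObject X)
    (hD : ∀ X : D, IsNoetherianObject X ∧ IsArtinianObject X)
    (F : C ⥤ D) [F.Additive] [F.Linear k]
    [PreservesFiniteLimits F] [PreservesFiniteColimits F]
    [F.Full] [F.Faithful] :
    (∀ X : C, Simple X → Simple (F.obj X)) ↔
      (∀ (X : C) (Z : D) (m : Z ⟶ F.obj X), Mono m →
        ∃ (Y : C) (i : Y ⟶ X), Mono i ∧ ∃ e : F.obj Y ≅ Z, e.hom ≫ m = F.map i) := by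
  constructor
  · intro hs X Z m hm
    exact SimpleLiftAux.lift_of_acc F hs (fun X => (hC X).2) X
      (SimpleLiftAux.acc_properQuot (fun X => (hC X).1) X) Z m hm
  · intro hlift X hX
    haveI := hX
    constructor
    intro W fw hfw
    haveI := hfw
    constructor
    · intro hiso h0
      have hId : 𝟙 (F.obj X) = 0 := by
        have h1 := IsIso.inv_hom_id fw
        simp only [h0, comp_zero] at h1
        exact h1.symm
      have : (𝟙 X : X ⟶ X) = 0 := F.map_injective (by rw [F.map_id, F.map_zero, hId])
      exact CategoryTheory.id_nonzero X this
    · intro h0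
      obtain ⟨Y, i, hi, e, he⟩ := hlift X W fw hfw
      haveI := hi
      have hine : i ≠ 0 := by
        intro hi0
        apply h0
        have hFi : F.map i = 0 := by rw [hi0, F.map_zero]
        rw [hFi] at he
        calc fw = e.inv ≫ (e.hom ≫ fw) := by simp
          _ = 0 := by rw [he, comp_zero]
      haveI : IsIso i := isIso_of_mono_of_nonzero hine
      have : fw = e.inv ≫ F.map i := by rw [← he]; simp
      rw [this]
      infer_instance
end

section
/- Let C₁, C₂, C₃, C₄ be abelian categories. Let F : C₁ → C₂ be an exact functor such that every object of C₂ is a subquotient of F(X) for some object X of C₁; let I : C₃ → C₄ be an exact, fully faithful functor whose essential image is closed under subquotients; and let G : C₁ → C₃ and H : C₂ → C₄ be exact functors equipped with a natural isomorphism F ⋙ H ≅ G ⋙ I. Then H factors through I: there exist a functor K : C₂ → C₃ and a natural isomorphism K ⋙ I ≅ H. -/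
open CategoryTheory CategoryTheory.Limits

universe v₁ u₁ v₂ u₂ v₃ u₃ v₄ u₄

/-- Given abelian categories `C₁, C₂, C₃, C₄`, an exact functor `F : C₁ ⥤ C₂` such that every
object of `C₂` is a subquotient of some `F(X)`, an exact fully faithful functor `I : C₃ ⥤ C₄`
whose essential image is closed under subquotients, and exact functors `G : C₁ ⥤ C₃`,
`H : C₂ ⥤ C₄` with a natural isomorphism `F ⋙ H ≅ G ⋙ I`, the functor `H` factors through
`I`: there is a functor `K : C₂ ⥤ C₃` with `K ⋙ I ≅ H`. -/
theorem factors_through_subcategory_of_surjective_injective_square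
    {C₁ : Type u₁} [Category.{v₁} C₁] [Abelian C₁]
    {C₂ : Type u₂} [Category.{v₂} C₂] [Abelian C₂]
    {C₃ : Type u₃} [Category.{v₃} C₃] [Abelian C₃]
    {C₄ : Type u₄} [Category.{v₄} C₄] [Abelian C₄]
    (F : C₁ ⥤ C₂) [PreservesFiniteLimits F] [PreservesFiniteColimits F]
    (hF : ∀ Z : C₂, ∃ X : C₁, IsSubquotient Z (F.obj X))
    (I : C₃ ⥤ C₄) [PreservesFiniteLimits I] [PreservesFiniteColimits I] [I.Full] [I.Faithful]
    (hI : ∀ (Z W : C₄), IsSubquotient W Z → I.essImage Z → I.essImage W)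
    (G : C₁ ⥤ C₃) [PreservesFiniteLimits G] [PreservesFiniteColimits G]
    (H : C₂ ⥤ C₄) [PreservesFiniteLimits H] [PreservesFiniteColimits H]
    (e : F ⋙ H ≅ G ⋙ I) :
    ∃ K : C₂ ⥤ C₃, Nonempty (K ⋙ I ≅ H) := by
  have hmem : ∀ Z : C₂, I.essImage (H.obj Z) := by
    intro Z
    obtain ⟨X, S, i, p, hi, hp⟩ := hF Z
    refine hI (H.obj (F.obj X)) (H.obj Z) ⟨H.obj S, H.map i, H.map p, ?_, ?_⟩ ?_
    · exact H.map_mono i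
    · exact H.map_epi p
    · exact ⟨G.obj X, ⟨(e.app X).symm⟩⟩
  let H' : C₂ ⥤ I.EssImageSubcategory := ObjectProperty.lift _ H hmem
  let Eq := I.toEssImage.asEquivalence
  refine ⟨H' ⋙ Eq.inverse, ⟨?_⟩⟩
  calc (H' ⋙ Eq.inverse) ⋙ I
      ≅ (H' ⋙ Eq.inverse) ⋙ (I.toEssImage ⋙ I.essImage.ι) :=
        Functor.isoWhiskerLeft _ I.toEssImageCompι.symm
    _ ≅ H' ⋙ (Eq.inverse ⋙ I.toEssImage ⋙ I.essImage.ι) :=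
        Functor.associator _ _ _
    _ ≅ H' ⋙ I.essImage.ι := Functor.isoWhiskerLeft H' (Eq.invFunIdAssoc I.essImage.ι)
    _ ≅ H := ObjectProperty.liftCompιIso _ H hmem
end

section
/- Let C be a pretannakian category over k and (A, μ, η) a commutative algebra object in C. Define the trace Tr : A → 1 as the composite A --(id_A ⊗ coev_A)--> A ⊗ A ⊗ A^∨ --(μ ⊗ id_{A^∨})--> A ⊗ A^∨ --(ev_A ∘ braiding_{A,A^∨})--> 1, and the trace form τ := Tr ∘ μ : A ⊗ A → 1. Then the following are equivalent: (1) A is separable, i.e. there exists a morphism s : A → A ⊗ A with μ ∘ s = id_A which is a morphism of A-bimodules, meaning (id_A ⊗ μ) ∘ (s ⊗ id_A) = s ∘ μ = (μ ⊗ id_A) ∘ (id_A ⊗ s); (2) there exists a morphism α : 1 → A ⊗ A such that (id_A ⊗ τ) ∘ (α ⊗ id_A) = id_A; (3) A is special Frobenius, i.e. the morphism (τ ⊗ id_{A^∨}) ∘ (id_A ⊗ coev_A) : A → A^∨ is an isomorphism. An algebra satisfying these equivalent conditions is called étale. -/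
open CategoryTheory CategoryTheory.Limits CategoryTheory.MonoidalCategory

universe w v u

section

variable {C : Type u} [Category.{v} C] [MonoidalCategory C] [BraidedCategory C]
  [RightRigidCategory C]

/-- The trace morphism `Tr : A ⟶ 𝟙` of an algebra `(A, μ)`:
`A ⟶ A ⊗ A ⊗ A^∨ ⟶ A ⊗ A^∨ ⟶ 𝟙` using multiplication, duality and the braiding. -/
noncomputable def algTrace (A : C) (μ : A ⊗ A ⟶ A) : A ⟶ 𝟙_ C :=
  (ρ_ A).inv ≫ (A ◁ η_ A (Aᘁ)) ≫ (α_ A A (Aᘁ)).inv ≫ (μ ▷ (Aᘁ)) ≫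
    (β_ A (Aᘁ)).hom ≫ ε_ A (Aᘁ)

/-- The trace form `τ := Tr ∘ μ : A ⊗ A ⟶ 𝟙`. -/
noncomputable def traceForm (A : C) (μ : A ⊗ A ⟶ A) : A ⊗ A ⟶ 𝟙_ C :=
  μ ≫ algTrace A μ

/-- The morphism `(τ ⊗ id_{A^∨}) ∘ (id_A ⊗ coev_A) : A ⟶ A^∨`. -/
noncomputable def etaleComparison (A : C) (μ : A ⊗ A ⟶ A) : A ⟶ (Aᘁ) :=
  (ρ_ A).inv ≫ (A ◁ η_ A (Aᘁ)) ≫ (α_ A A (Aᘁ)).inv ≫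
    (traceForm A μ ▷ (Aᘁ)) ≫ (λ_ (Aᘁ)).hom

end

section Aux

variable {C : Type u} [Category.{v} C] [MonoidalCategory C] [SymmetricCategory C]
  [RightRigidCategory C]

variable (A : C) (μ : A ⊗ A ⟶ A) (η : 𝟙_ C ⟶ A)

/-- Mate relation: evaluating against the comparison map recovers the trace form. -/
theorem et_mate : (etaleComparison A μ ▷ A) ≫ ε_ A (Aᘁ) = traceForm A μ := by
  rw [etaleComparison]
  calc ((ρ_ A).inv ≫ (A ◁ η_ A (Aᘁ)) ≫ (α_ A A (Aᘁ)).inv ≫ (traceForm A μ ▷ (Aᘁ)) ≫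
        (λ_ (Aᘁ)).hom) ▷ A ≫ ε_ A (Aᘁ)
      = 𝟙 _ ⊗≫ (A ◁ η_ A (Aᘁ)) ▷ A ⊗≫
          (traceForm A μ ▷ ((Aᘁ) ⊗ A) ≫ 𝟙_ C ◁ ε_ A (Aᘁ)) ⊗≫ 𝟙 _ := by
        monoidal
    _ = 𝟙 _ ⊗≫ (A ◁ η_ A (Aᘁ)) ▷ A ⊗≫
          ((A ⊗ A) ◁ ε_ A (Aᘁ) ≫ traceForm A μ ▷ 𝟙_ C) ⊗≫ 𝟙 _ := by
        rw [← whisker_exchange]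
    _ = 𝟙 _ ⊗≫ A ◁ (η_ A (Aᘁ) ▷ A ≫ (α_ A (Aᘁ) A).hom ≫ A ◁ ε_ A (Aᘁ)) ⊗≫
          traceForm A μ ⊗≫ 𝟙 _ := by
        monoidal
    _ = 𝟙 _ ⊗≫ A ◁ ((λ_ A).hom ≫ (ρ_ A).inv) ⊗≫ traceForm A μ ⊗≫ 𝟙 _ := by
        rw [ExactPairing.evaluation_coevaluation]
    _ = traceForm A μ := by monoidal

theorem et_tau_assoc (hassoc : (α_ A A A).hom ≫ (A ◁ μ) ≫ μ = (μ ▷ A) ≫ μ) :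
    (μ ▷ A) ≫ traceForm A μ = (α_ A A A).hom ≫ (A ◁ μ) ≫ traceForm A μ := by
  have h := congrArg (· ≫ algTrace A μ) hassoc
  simp only [Category.assoc] at h
  rw [traceForm]
  exact h.symm

theorem et_tau_comm (hcomm : (β_ A A).hom ≫ μ = μ) :
    (β_ A A).hom ≫ traceForm A μ = traceForm A μ := by
  have h := congrArg (· ≫ algTrace A μ) hcomm
  simp only [Category.assoc] at h
  rw [traceForm]
  exact h

theorem et_phi (hcomm : (β_ A A).hom ≫ μ = μ) {X : C} (w : X ⟶ A ⊗ A) :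
    (w ▷ A) ≫ (α_ A A A).hom ≫ (A ◁ traceForm A μ) ≫ (ρ_ A).hom =
      ((w ≫ (A ◁ etaleComparison A μ)) ▷ A) ≫ (α_ A (Aᘁ) A).hom ≫ (A ◁ ε_ A (Aᘁ)) ≫
        (ρ_ A).hom := by
  symm
  calc ((w ≫ (A ◁ etaleComparison A μ)) ▷ A) ≫ (α_ A (Aᘁ) A).hom ≫ (A ◁ ε_ A (Aᘁ)) ≫
        (ρ_ A).hom
      = (w ▷ A) ≫ ((A ◁ etaleComparison A μ) ▷ A ≫ (α_ A (Aᘁ) A).hom) ≫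
          (A ◁ ε_ A (Aᘁ)) ≫ (ρ_ A).hom := by
        rw [comp_whiskerRight]; simp only [Category.assoc]
    _ = (w ▷ A) ≫ (α_ A A A).hom ≫ (A ◁ (etaleComparison A μ ▷ A)) ≫
          (A ◁ ε_ A (Aᘁ)) ≫ (ρ_ A).hom := by
        rw [associator_naturality_middle]; simp only [Category.assoc]
    _ = (w ▷ A) ≫ (α_ A A A).hom ≫ (A ◁ traceForm A μ) ≫ (ρ_ A).hom := by
        rw [← MonoidalCategory.whiskerLeft_comp_assoc, et_mate]

theorem et_coev_symm :
    (tensorRightHomEquiv (𝟙_ C) A (Aᘁ) A).symm (η_ A (Aᘁ)) = (λ_ A).hom := by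
  have h := congrArg (· ≫ (ρ_ A).hom) (ExactPairing.evaluation_coevaluation A (Aᘁ))
  simp only [Category.assoc, Iso.inv_hom_id, Category.comp_id] at h
  simp only [tensorRightHomEquiv, Equiv.coe_fn_symm_mk]
  exact h

theorem et_key (hcomm : (β_ A A).hom ≫ μ = μ) (g : 𝟙_ C ⟶ A ⊗ A) :
    ((λ_ A).inv ≫ (g ▷ A) ≫ (α_ A A A).hom ≫ (A ◁ traceForm A μ) ≫ (ρ_ A).hom = 𝟙 A) ↔
      g ≫ (A ◁ etaleComparison A μ) = η_ A (Aᘁ) := by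
  have hsymm := et_coev_symm A
  simp only [tensorRightHomEquiv, Equiv.coe_fn_symm_mk] at hsymm
  constructor
  · intro h
    have h2 : (g ▷ A) ≫ (α_ A A A).hom ≫ (A ◁ traceForm A μ) ≫ (ρ_ A).hom =
        (λ_ A).hom := by
      have := (Iso.inv_comp_eq (λ_ A)).mp h
      simpa using this
    rw [et_phi A μ hcomm g] at h2
    have h3 : (tensorRightHomEquiv (𝟙_ C) A (Aᘁ) A).symm (g ≫ (A ◁ etaleComparison A μ)) =
        (tensorRightHomEquiv (𝟙_ C) A (Aᘁ) A).symm (η_ A (Aᘁ)) := by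
      rw [et_coev_symm]
      simpa only [tensorRightHomEquiv, Equiv.coe_fn_symm_mk] using h2
    exact (tensorRightHomEquiv (𝟙_ C) A (Aᘁ) A).symm.injective h3
  · intro h
    rw [et_phi A μ hcomm g, h, hsymm]
    simp

theorem et_psi (g : 𝟙_ C ⟶ A ⊗ A) (hc : g ≫ (A ◁ etaleComparison A μ) = η_ A (Aᘁ)) :
    ((ρ_ (Aᘁ)).inv ≫ ((Aᘁ) ◁ g) ≫ (α_ (Aᘁ) A A).inv ≫ (ε_ A (Aᘁ) ▷ A) ≫ (λ_ A).hom) ≫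
      etaleComparison A μ = 𝟙 (Aᘁ) := by
  simp only [Category.assoc]
  have hlam : (λ_ A).hom ≫ etaleComparison A μ =
      (𝟙_ C ◁ etaleComparison A μ) ≫ (λ_ (Aᘁ)).hom := by simp
  slice_lhs 5 6 => rw [hlam]
  slice_lhs 4 5 => rw [← whisker_exchange]
  slice_lhs 3 4 => rw [← associator_inv_naturality_right]
  slice_lhs 2 3 => rw [← MonoidalCategory.whiskerLeft_comp, hc]
  slice_lhs 2 4 => rw [ExactPairing.coevaluation_evaluation]
  simp

theorem et_chi (hcomm : (β_ A A).hom ≫ μ = μ) (g : 𝟙_ C ⟶ A ⊗ A) :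
    etaleComparison A μ ≫
      ((λ_ (Aᘁ)).inv ≫ (g ▷ (Aᘁ)) ≫ (α_ A A (Aᘁ)).hom ≫
        (A ◁ ((β_ A (Aᘁ)).hom ≫ ε_ A (Aᘁ))) ≫ (ρ_ A).hom) =
      (λ_ A).inv ≫ (g ▷ A) ≫ (α_ A A A).hom ≫ (A ◁ traceForm A μ) ≫ (ρ_ A).hom := by
  have hinner : (A ◁ etaleComparison A μ) ≫ (β_ A (Aᘁ)).hom ≫ ε_ A (Aᘁ) =
      traceForm A μ := by
    rw [BraidedCategory.braiding_naturality_right_assoc, et_mate, et_tau_comm A μ hcomm]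
  slice_lhs 1 2 => rw [leftUnitor_inv_naturality]
  slice_lhs 2 3 => rw [whisker_exchange]
  slice_lhs 3 4 => rw [associator_naturality_right]
  slice_lhs 4 5 => rw [← MonoidalCategory.whiskerLeft_comp]
  rw [hinner]

theorem et_inj_e {X : C} (u v : X ⟶ (Aᘁ))
    (h : (u ▷ A) ≫ ε_ A (Aᘁ) = (v ▷ A) ≫ ε_ A (Aᘁ)) : u = v := by
  have key : ∀ t : X ⟶ (Aᘁ), (ρ_ X).inv ≫ (X ◁ η_ A (Aᘁ)) ≫ (α_ X A (Aᘁ)).inv ≫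
      (((t ▷ A) ≫ ε_ A (Aᘁ)) ▷ (Aᘁ)) ≫ (λ_ (Aᘁ)).hom = t := by
    intro t
    rw [comp_whiskerRight]
    simp only [Category.assoc]
    slice_lhs 3 4 => rw [← associator_inv_naturality_left]
    slice_lhs 2 3 => rw [whisker_exchange]
    slice_lhs 1 2 => rw [← rightUnitor_inv_naturality]
    slice_lhs 3 5 => rw [ExactPairing.coevaluation_evaluation]
    simp
  rw [← key u, ← key v, h]

/-- part (2) ↔ (3) -/
theorem et_part2 (hcomm : (β_ A A).hom ≫ μ = μ) :
    (∃ a : 𝟙_ C ⟶ A ⊗ A,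
        (λ_ A).inv ≫ (a ▷ A) ≫ (α_ A A A).hom ≫ (A ◁ traceForm A μ) ≫ (ρ_ A).hom = 𝟙 A) ↔
      IsIso (etaleComparison A μ) := by
  constructor
  · rintro ⟨g, hg⟩
    have hc := (et_key A μ hcomm g).mp hg
    have hψ := et_psi A μ g hc
    have hχ : etaleComparison A μ ≫
        ((λ_ (Aᘁ)).inv ≫ (g ▷ (Aᘁ)) ≫ (α_ A A (Aᘁ)).hom ≫
          (A ◁ ((β_ A (Aᘁ)).hom ≫ ε_ A (Aᘁ))) ≫ (ρ_ A).hom) = 𝟙 A := by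
      rw [et_chi A μ hcomm g]; exact hg
    set ψ := (ρ_ (Aᘁ)).inv ≫ ((Aᘁ) ◁ g) ≫ (α_ (Aᘁ) A A).inv ≫ (ε_ A (Aᘁ) ▷ A) ≫ (λ_ A).hom
      with hψdef
    set χ := (λ_ (Aᘁ)).inv ≫ (g ▷ (Aᘁ)) ≫ (α_ A A (Aᘁ)).hom ≫
        (A ◁ ((β_ A (Aᘁ)).hom ≫ ε_ A (Aᘁ))) ≫ (ρ_ A).hom with hχdef
    have hχψ : χ = ψ := by
      rw [← Category.id_comp χ, ← hψ, Category.assoc, hχ, Category.comp_id]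
    refine ⟨χ, hχ, ?_⟩
    rw [hχψ]; exact hψ
  · intro hIso
    refine ⟨η_ A (Aᘁ) ≫ (A ◁ inv (etaleComparison A μ)), (et_key A μ hcomm _).mpr ?_⟩
    rw [Category.assoc, ← MonoidalCategory.whiskerLeft_comp, IsIso.inv_hom_id,
      MonoidalCategory.whiskerLeft_id, Category.comp_id]

theorem et_T (hcomm : (β_ A A).hom ≫ μ = μ) (g : 𝟙_ C ⟶ A ⊗ A)
    (hc : g ≫ (A ◁ etaleComparison A μ) = η_ A (Aᘁ)) :
    algTrace A μ =
      (ρ_ A).inv ≫ (A ◁ g) ≫ (α_ A A A).inv ≫ (μ ▷ A) ≫ traceForm A μ := by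
  rw [algTrace, ← hc, MonoidalCategory.whiskerLeft_comp]
  simp only [Category.assoc]
  slice_lhs 3 4 => rw [associator_inv_naturality_right]
  slice_lhs 4 5 => rw [whisker_exchange]
  slice_lhs 5 6 => rw [BraidedCategory.braiding_naturality_right]
  slice_lhs 6 7 => rw [et_mate]
  slice_lhs 5 6 => rw [et_tau_comm A μ hcomm]

theorem et_cyc (hassoc : (α_ A A A).hom ≫ (A ◁ μ) ≫ μ = (μ ▷ A) ≫ μ)
    (hcomm : (β_ A A).hom ≫ μ = μ) (g : 𝟙_ C ⟶ A ⊗ A) :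
    (g ▷ A) ≫ (μ ▷ A) ≫ μ =
      (λ_ A).hom ≫ (ρ_ A).inv ≫ (A ◁ g) ≫ (α_ A A A).inv ≫ (μ ▷ A) ≫ μ := by
  have hassoc' : (α_ A A A).inv ≫ (μ ▷ A) ≫ μ = (A ◁ μ) ≫ μ := by
    rw [← hassoc, Iso.inv_hom_id_assoc]
  symm
  calc (λ_ A).hom ≫ (ρ_ A).inv ≫ (A ◁ g) ≫ (α_ A A A).inv ≫ (μ ▷ A) ≫ μ
      = (β_ (𝟙_ C) A).hom ≫ (A ◁ g) ≫ (α_ A A A).inv ≫ (μ ▷ A) ≫ μ := by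
        rw [braiding_tensorUnit_left]; simp only [Category.assoc]
    _ = (g ▷ A) ≫ (β_ (A ⊗ A) A).hom ≫ (α_ A A A).inv ≫ (μ ▷ A) ≫ μ := by
        rw [← BraidedCategory.braiding_naturality_left_assoc]
    _ = (g ▷ A) ≫ (β_ (A ⊗ A) A).hom ≫ (A ◁ μ) ≫ μ := by
        rw [hassoc']
    _ = (g ▷ A) ≫ (μ ▷ A) ≫ (β_ A A).hom ≫ μ := by
        rw [← BraidedCategory.braiding_naturality_left_assoc]
    _ = (g ▷ A) ≫ (μ ▷ A) ≫ μ := by rw [hcomm]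

theorem et_Du (hassoc : (α_ A A A).hom ≫ (A ◁ μ) ≫ μ = (μ ▷ A) ≫ μ) (g : 𝟙_ C ⟶ A ⊗ A) :
    (((λ_ A).inv ≫ (g ▷ A) ≫ (α_ A A A).hom ≫ (A ◁ μ)) ▷ A) ≫ (α_ A A A).hom ≫
        (A ◁ traceForm A μ) ≫ (ρ_ A).hom =
      μ ≫ ((λ_ A).inv ≫ (g ▷ A) ≫ (α_ A A A).hom ≫ (A ◁ traceForm A μ) ≫ (ρ_ A).hom) := by
  calc (((λ_ A).inv ≫ (g ▷ A) ≫ (α_ A A A).hom ≫ (A ◁ μ)) ▷ A) ≫ (α_ A A A).hom ≫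
        (A ◁ traceForm A μ) ≫ (ρ_ A).hom
      = 𝟙 _ ⊗≫ (g ▷ (A ⊗ A)) ⊗≫ (A ◁ ((μ ▷ A) ≫ traceForm A μ)) ⊗≫ 𝟙 _ := by
        monoidal
    _ = 𝟙 _ ⊗≫ (g ▷ (A ⊗ A)) ⊗≫
          (A ◁ ((α_ A A A).hom ≫ (A ◁ μ) ≫ traceForm A μ)) ⊗≫ 𝟙 _ := by
        rw [et_tau_assoc A μ hassoc]
    _ = 𝟙 _ ⊗≫ (g ▷ (A ⊗ A) ≫ (A ⊗ A) ◁ μ) ⊗≫ (A ◁ traceForm A μ) ⊗≫ 𝟙 _ := by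
        monoidal
    _ = 𝟙 _ ⊗≫ (𝟙_ C ◁ μ ≫ g ▷ A) ⊗≫ (A ◁ traceForm A μ) ⊗≫ 𝟙 _ := by
        rw [← whisker_exchange]
    _ = μ ≫ ((λ_ A).inv ≫ (g ▷ A) ≫ (α_ A A A).hom ≫ (A ◁ traceForm A μ) ≫ (ρ_ A).hom) := by
        monoidal

theorem et_Ds (g : 𝟙_ C ⟶ A ⊗ A) :
    ((((ρ_ A).inv ≫ (A ◁ g) ≫ (α_ A A A).inv ≫ (μ ▷ A))) ▷ A) ≫ (α_ A A A).hom ≫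
        (A ◁ traceForm A μ) ≫ (ρ_ A).hom =
      (A ◁ ((λ_ A).inv ≫ (g ▷ A) ≫ (α_ A A A).hom ≫ (A ◁ traceForm A μ) ≫ (ρ_ A).hom)) ≫
        μ := by
  calc ((((ρ_ A).inv ≫ (A ◁ g) ≫ (α_ A A A).inv ≫ (μ ▷ A))) ▷ A) ≫ (α_ A A A).hom ≫
        (A ◁ traceForm A μ) ≫ (ρ_ A).hom
      = 𝟙 _ ⊗≫ ((A ◁ g) ▷ A) ⊗≫
          (μ ▷ (A ⊗ A) ≫ A ◁ traceForm A μ) ⊗≫ 𝟙 _ := by monoidal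
    _ = 𝟙 _ ⊗≫ ((A ◁ g) ▷ A) ⊗≫
          ((A ⊗ A) ◁ traceForm A μ ≫ μ ▷ 𝟙_ C) ⊗≫ 𝟙 _ := by rw [whisker_exchange]
    _ = (A ◁ ((λ_ A).inv ≫ (g ▷ A) ≫ (α_ A A A).hom ≫ (A ◁ traceForm A μ) ≫ (ρ_ A).hom)) ≫
          μ := by monoidal

theorem et_Dleft (hassoc : (α_ A A A).hom ≫ (A ◁ μ) ≫ μ = (μ ▷ A) ≫ μ) (g : 𝟙_ C ⟶ A ⊗ A) :
    (A ◁ ((ρ_ A).inv ≫ (A ◁ g) ≫ (α_ A A A).inv ≫ (μ ▷ A))) ≫ (α_ A A A).inv ≫ (μ ▷ A) =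
      μ ≫ ((ρ_ A).inv ≫ (A ◁ g) ≫ (α_ A A A).inv ≫ (μ ▷ A)) := by
  calc (A ◁ ((ρ_ A).inv ≫ (A ◁ g) ≫ (α_ A A A).inv ≫ (μ ▷ A))) ≫ (α_ A A A).inv ≫ (μ ▷ A)
      = 𝟙 (A ⊗ A) ⊗≫ ((A ⊗ A) ◁ g) ⊗≫ (((α_ A A A).hom ≫ (A ◁ μ) ≫ μ) ▷ A) ⊗≫
          𝟙 (A ⊗ A) := by monoidal
    _ = 𝟙 (A ⊗ A) ⊗≫ ((A ⊗ A) ◁ g ≫ μ ▷ (A ⊗ A)) ⊗≫ (μ ▷ A) ⊗≫ 𝟙 (A ⊗ A) := by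
        rw [hassoc]; monoidal
    _ = μ ≫ ((ρ_ A).inv ≫ (A ◁ g) ≫ (α_ A A A).inv ≫ (μ ▷ A)) := by
        rw [whisker_exchange]; monoidal

theorem et_Dright (g : 𝟙_ C ⟶ A ⊗ A) :
    (((ρ_ A).inv ≫ (A ◁ g) ≫ (α_ A A A).inv ≫ (μ ▷ A)) ▷ A) ≫ (α_ A A A).hom ≫ (A ◁ μ) =
      (A ◁ ((λ_ A).inv ≫ (g ▷ A) ≫ (α_ A A A).hom ≫ (A ◁ μ))) ≫ (α_ A A A).inv ≫
        (μ ▷ A) := by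
  calc (((ρ_ A).inv ≫ (A ◁ g) ≫ (α_ A A A).inv ≫ (μ ▷ A)) ▷ A) ≫ (α_ A A A).hom ≫ (A ◁ μ)
      = 𝟙 _ ⊗≫ ((A ◁ g) ▷ A) ⊗≫ (μ ▷ (A ⊗ A) ≫ A ◁ μ) ⊗≫ 𝟙 _ := by monoidal
    _ = 𝟙 _ ⊗≫ ((A ◁ g) ▷ A) ⊗≫ ((A ⊗ A) ◁ μ ≫ μ ▷ A) ⊗≫ 𝟙 _ := by
        rw [← whisker_exchange]
    _ = (A ◁ ((λ_ A).inv ≫ (g ▷ A) ≫ (α_ A A A).hom ≫ (A ◁ μ))) ≫ (α_ A A A).inv ≫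
          (μ ▷ A) := by monoidal

theorem et_zig {B : C} (w : 𝟙_ C ⟶ B ⊗ A) :
    η_ A (Aᘁ) ⊗≫ (A ◁ w) ▷ (Aᘁ) ⊗≫
        (A ⊗ B) ◁ ((β_ A (Aᘁ)).hom ≫ ε_ A (Aᘁ)) ⊗≫ 𝟙 (A ⊗ B) =
      w ≫ (β_ B A).hom := by
  calc η_ A (Aᘁ) ⊗≫ (A ◁ w) ▷ (Aᘁ) ⊗≫
        (A ⊗ B) ◁ ((β_ A (Aᘁ)).hom ≫ ε_ A (Aᘁ)) ⊗≫ 𝟙 (A ⊗ B)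
      = η_ A (Aᘁ) ≫ (A ◁ ((λ_ (Aᘁ)).inv ≫ (w ▷ (Aᘁ)) ≫ (α_ B A (Aᘁ)).hom ≫
          (B ◁ ((β_ A (Aᘁ)).hom ≫ ε_ A (Aᘁ))) ≫ (ρ_ B).hom)) := by monoidal
    _ = w ≫ (β_ B A).hom := ?_
  apply (tensorLeftHomEquiv (𝟙_ C) A (Aᘁ) B).symm.injective
  rw [tensorLeftHomEquiv_symm_coevaluation_comp_whiskerLeft]
  simp only [tensorLeftHomEquiv, Equiv.coe_fn_symm_mk]
  symm
  -- LHS : Aᘁ ◁ (w ≫ β_{B,A}) ≫ α⁻¹ ≫ ε ▷ B ≫ λ_B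
  -- RHS : ρ_D ≫ (λ_D⁻¹ ≫ w ▷ D ≫ α ≫ B ◁ (β_{A,D} ≫ ε) ≫ ρ_B)
  rw [MonoidalCategory.whiskerLeft_comp]
  conv_rhs => rw [MonoidalCategory.whiskerLeft_comp,
    show (β_ A (Aᘁ)).hom = (β_ (Aᘁ) A).inv from
      SymmetricCategory.braiding_swap_eq_inv_braiding _ _]
  slice_rhs 1 2 => rw [← braiding_tensorUnit_right]
  slice_rhs 1 2 => rw [← BraidedCategory.braiding_naturality_right]
  rw [BraidedCategory.braiding_tensor_right_hom]
  simp only [Category.assoc, Iso.inv_hom_id_assoc, Iso.hom_inv_id_assoc,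
    ← MonoidalCategory.whiskerLeft_comp_assoc, Iso.hom_inv_id,
    MonoidalCategory.whiskerLeft_id, Category.id_comp]
  -- now work on LHS
  have hl : (ε_ A (Aᘁ) ▷ B) ≫ (λ_ B).hom =
      (ε_ A (Aᘁ) ▷ B) ≫ (β_ (𝟙_ C) B).hom ≫ (ρ_ B).hom := by simp
  rw [hl, BraidedCategory.braiding_naturality_left_assoc,
    BraidedCategory.braiding_tensor_left_hom]
  simp only [Category.assoc, Iso.inv_hom_id_assoc,
    ← MonoidalCategory.whiskerLeft_comp_assoc, SymmetricCategory.symmetry,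
    MonoidalCategory.whiskerLeft_id, Category.id_comp, Category.comp_id]

theorem et_theta_eq (hassoc : (α_ A A A).hom ≫ (A ◁ μ) ≫ μ = (μ ▷ A) ≫ μ)
    (hone : (η ▷ A) ≫ μ = (λ_ A).hom) (hone' : (A ◁ η) ≫ μ = (ρ_ A).hom)
    (hcomm : (β_ A A).hom ≫ μ = μ) (s : A ⟶ A ⊗ A) (hsμ : s ≫ μ = 𝟙 A)
    (hright : (s ▷ A) ≫ (α_ A A A).hom ≫ (A ◁ μ) = μ ≫ s)
    (hleft : (A ◁ s) ≫ (α_ A A A).inv ≫ (μ ▷ A) = μ ≫ s) :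
    (λ_ A).inv ≫ ((η ≫ s) ▷ A) ≫ (α_ A A A).hom ≫ (A ◁ traceForm A μ) ≫ (ρ_ A).hom =
      𝟙 A := by
  have hu : (λ_ A).inv ≫ ((η ≫ s) ▷ A) ≫ (α_ A A A).hom ≫ (A ◁ μ) = s := by
    rw [comp_whiskerRight]
    simp only [Category.assoc]
    slice_lhs 3 5 => rw [hright]
    slice_lhs 2 3 => rw [hone]
    simp
  have hv : s = (ρ_ A).inv ≫ (A ◁ (η ≫ s)) ≫ (α_ A A A).inv ≫ (μ ▷ A) := by
    symm
    rw [MonoidalCategory.whiskerLeft_comp]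
    simp only [Category.assoc]
    slice_lhs 3 5 => rw [hleft]
    slice_lhs 2 3 => rw [hone']
    simp
  have hgμ : (η ≫ s) ≫ μ = η := by rw [Category.assoc, hsμ, Category.comp_id]
  have hassoc' : (α_ A A A).inv ≫ (μ ▷ A) ≫ μ = (A ◁ μ) ≫ μ := by
    rw [← hassoc, Iso.inv_hom_id_assoc]
  -- Step 1 : reduce to s ≫ (A ◁ Tr) ≫ ρ
  rw [show traceForm A μ = μ ≫ algTrace A μ from rfl, MonoidalCategory.whiskerLeft_comp]
  have step1 : (λ_ A).inv ≫ ((η ≫ s) ▷ A) ≫ (α_ A A A).hom ≫ (A ◁ μ) ≫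
      (A ◁ algTrace A μ) ≫ (ρ_ A).hom = s ≫ (A ◁ algTrace A μ) ≫ (ρ_ A).hom := by
    slice_lhs 1 4 => rw [hu]
    simp only [Category.assoc]
  simp only [Category.assoc]
  rw [step1]
  -- Step 2 : the main computation
  calc s ≫ (A ◁ algTrace A μ) ≫ (ρ_ A).hom
      = 𝟙 A ⊗≫ (s ▷ 𝟙_ C ≫ (A ⊗ A) ◁ η_ A (Aᘁ)) ⊗≫ (A ◁ (μ ▷ (Aᘁ))) ⊗≫
          (A ◁ ((β_ A (Aᘁ)).hom ≫ ε_ A (Aᘁ))) ⊗≫ 𝟙 A := by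
        rw [algTrace]; monoidal
    _ = 𝟙 A ⊗≫ (A ◁ η_ A (Aᘁ) ≫ s ▷ (A ⊗ (Aᘁ))) ⊗≫ (A ◁ (μ ▷ (Aᘁ))) ⊗≫
          (A ◁ ((β_ A (Aᘁ)).hom ≫ ε_ A (Aᘁ))) ⊗≫ 𝟙 A := by
        rw [← whisker_exchange]
    _ = 𝟙 A ⊗≫ (A ◁ η_ A (Aᘁ)) ⊗≫
          (((s ▷ A) ≫ (α_ A A A).hom ≫ (A ◁ μ)) ▷ (Aᘁ)) ⊗≫
          (A ◁ ((β_ A (Aᘁ)).hom ≫ ε_ A (Aᘁ))) ⊗≫ 𝟙 A := by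
        monoidal
    _ = 𝟙 A ⊗≫ (A ◁ η_ A (Aᘁ)) ⊗≫ ((μ ≫ s) ▷ (Aᘁ)) ⊗≫
          (A ◁ ((β_ A (Aᘁ)).hom ≫ ε_ A (Aᘁ))) ⊗≫ 𝟙 A := by
        rw [hright]
    _ = 𝟙 A ⊗≫ (A ◁ η_ A (Aᘁ)) ⊗≫
          ((μ ≫ (ρ_ A).inv ≫ (A ◁ (η ≫ s)) ≫ (α_ A A A).inv ≫ (μ ▷ A)) ▷ (Aᘁ)) ⊗≫
          (A ◁ ((β_ A (Aᘁ)).hom ≫ ε_ A (Aᘁ))) ⊗≫ 𝟙 A := by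
        rw [← hv]
    _ = 𝟙 A ⊗≫ (A ◁ η_ A (Aᘁ)) ⊗≫ ((μ ▷ 𝟙_ C ≫ A ◁ (η ≫ s)) ▷ (Aᘁ)) ⊗≫
          (((μ ▷ A) ▷ (Aᘁ))) ⊗≫ (A ◁ ((β_ A (Aᘁ)).hom ≫ ε_ A (Aᘁ))) ⊗≫ 𝟙 A := by
        monoidal
    _ = 𝟙 A ⊗≫ (A ◁ η_ A (Aᘁ)) ⊗≫
          (((A ⊗ A) ◁ (η ≫ s) ≫ μ ▷ (A ⊗ A)) ▷ (Aᘁ)) ⊗≫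
          (((μ ▷ A) ▷ (Aᘁ))) ⊗≫ (A ◁ ((β_ A (Aᘁ)).hom ≫ ε_ A (Aᘁ))) ⊗≫ 𝟙 A := by
        rw [← whisker_exchange]
    _ = 𝟙 A ⊗≫ (A ◁ η_ A (Aᘁ)) ⊗≫ (((A ⊗ A) ◁ (η ≫ s)) ▷ (Aᘁ)) ⊗≫
          ((((μ ▷ A) ≫ μ) ▷ (A ⊗ (Aᘁ))) ≫ (A ◁ ((β_ A (Aᘁ)).hom ≫ ε_ A (Aᘁ)))) ⊗≫
          𝟙 A := by
        monoidal
    _ = 𝟙 A ⊗≫ (A ◁ η_ A (Aᘁ)) ⊗≫ (((A ⊗ A) ◁ (η ≫ s)) ▷ (Aᘁ)) ⊗≫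
          ((((A ⊗ A) ⊗ A) ◁ ((β_ A (Aᘁ)).hom ≫ ε_ A (Aᘁ))) ≫
            (((μ ▷ A) ≫ μ) ▷ 𝟙_ C)) ⊗≫ 𝟙 A := by
        rw [whisker_exchange]
    _ = 𝟙 A ⊗≫ (A ◁ (η_ A (Aᘁ) ⊗≫ (A ◁ (η ≫ s)) ▷ (Aᘁ) ⊗≫
          (A ⊗ A) ◁ ((β_ A (Aᘁ)).hom ≫ ε_ A (Aᘁ)) ⊗≫ 𝟙 (A ⊗ A))) ⊗≫
          (((μ ▷ A) ≫ μ) ▷ 𝟙_ C) ⊗≫ 𝟙 A := by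
        monoidal
    _ = 𝟙 A ⊗≫ (A ◁ ((η ≫ s) ≫ (β_ A A).hom)) ⊗≫ (((μ ▷ A) ≫ μ) ▷ 𝟙_ C) ⊗≫ 𝟙 A := by
        rw [et_zig A (η ≫ s)]
    _ = (ρ_ A).inv ≫ (A ◁ ((η ≫ s) ≫ (β_ A A).hom)) ≫ (α_ A A A).inv ≫ (μ ▷ A) ≫ μ := by
        monoidal
    _ = (ρ_ A).inv ≫ (A ◁ ((η ≫ s) ≫ (β_ A A).hom)) ≫ (A ◁ μ) ≫ μ := by rw [hassoc']
    _ = (ρ_ A).inv ≫ (A ◁ ((η ≫ s) ≫ (β_ A A).hom ≫ μ)) ≫ μ := by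
        rw [← MonoidalCategory.whiskerLeft_comp_assoc]; simp only [Category.assoc]
    _ = (ρ_ A).inv ≫ (A ◁ η) ≫ μ := by rw [hcomm, hgμ]
    _ = 𝟙 A := by rw [hone', Iso.inv_hom_id]

end Aux

/-- For a commutative algebra `(A, μ, η)` in a pretannakian category `C` over `k`, the
following are equivalent: (1) `A` is separable (`μ` admits an `A`-bimodule section);
(2) there is `α : 𝟙 ⟶ A ⊗ A` with `(id_A ⊗ τ) ∘ (α ⊗ id_A) = id_A`, where `τ` is the trace
form; (3) `A` is special Frobenius, i.e. `(τ ⊗ id_{A^∨}) ∘ (id_A ⊗ coev_A) : A ⟶ A^∨` is an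
isomorphism. -/
theorem etale_tfae
    {k : Type*} [Field k]
    {C : Type u} [Category.{v} C] [Abelian C] [Linear k C]
    [MonoidalCategory C] [SymmetricCategory C] [MonoidalPreadditive C] [MonoidalLinear k C]
    [RigidCategory C] [EssentiallySmall.{w} C]
    (hCunit : Function.Bijective fun a : k => a • (𝟙 (𝟙_ C)))
    (hClen : ∀ X : C, IsNoetherianObject X ∧ IsArtinianObject X)
    (A : C) (μ : A ⊗ A ⟶ A) (η : 𝟙_ C ⟶ A)
    (hassoc : (α_ A A A).hom ≫ (A ◁ μ) ≫ μ = (μ ▷ A) ≫ μ)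
    (hone : (η ▷ A) ≫ μ = (λ_ A).hom)
    (hone' : (A ◁ η) ≫ μ = (ρ_ A).hom)
    (hcomm : (β_ A A).hom ≫ μ = μ) :
    ((∃ s : A ⟶ A ⊗ A, s ≫ μ = 𝟙 A ∧
        (s ▷ A) ≫ (α_ A A A).hom ≫ (A ◁ μ) = μ ≫ s ∧
        (A ◁ s) ≫ (α_ A A A).inv ≫ (μ ▷ A) = μ ≫ s) ↔
      (∃ a : 𝟙_ C ⟶ A ⊗ A,
        (λ_ A).inv ≫ (a ▷ A) ≫ (α_ A A A).hom ≫ (A ◁ traceForm A μ) ≫ (ρ_ A).hom = 𝟙 A)) ∧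
    ((∃ a : 𝟙_ C ⟶ A ⊗ A,
        (λ_ A).inv ≫ (a ▷ A) ≫ (α_ A A A).hom ≫ (A ◁ traceForm A μ) ≫ (ρ_ A).hom = 𝟙 A) ↔
      IsIso (etaleComparison A μ)) := by
  have hB := et_part2 A μ hcomm
  refine ⟨⟨?_, ?_⟩, hB⟩
  · rintro ⟨s, hsμ, hright, hleft⟩
    exact ⟨η ≫ s, et_theta_eq A μ η hassoc hone hone' hcomm s hsμ hright hleft⟩
  · rintro ⟨g, hg⟩
    have hIso : IsIso (etaleComparison A μ) := hB.mp ⟨g, hg⟩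
    have hc := (et_key A μ hcomm g).mp hg
    set φ := etaleComparison A μ with hφdef
    set s := (ρ_ A).inv ≫ (A ◁ g) ≫ (α_ A A A).inv ≫ (μ ▷ A) with hsdef
    set u := (λ_ A).inv ≫ (g ▷ A) ≫ (α_ A A A).hom ≫ (A ◁ μ) with hudef
    -- Casimir property : u = s
    have hCas : u = s := by
      have h1 : (u ▷ A) ≫ (α_ A A A).hom ≫ (A ◁ traceForm A μ) ≫ (ρ_ A).hom =
          (s ▷ A) ≫ (α_ A A A).hom ≫ (A ◁ traceForm A μ) ≫ (ρ_ A).hom := by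
        rw [hudef, hsdef, et_Du A μ hassoc g, et_Ds A μ g, hg]
        simp
      rw [et_phi A μ hcomm u, et_phi A μ hcomm s] at h1
      have h2 : u ≫ (A ◁ φ) = s ≫ (A ◁ φ) := by
        apply (tensorRightHomEquiv A A (Aᘁ) A).symm.injective
        simp only [tensorRightHomEquiv, Equiv.coe_fn_symm_mk]
        simpa using h1
      rw [show A ◁ φ = (whiskerLeftIso A (asIso φ)).hom from rfl] at h2
      exact (Iso.cancel_iso_hom_right u s _).mp h2
    have hleft' : (A ◁ s) ≫ (α_ A A A).inv ≫ (μ ▷ A) = μ ≫ s := by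
      rw [hsdef]; exact et_Dleft A μ hassoc g
    have hright' : (s ▷ A) ≫ (α_ A A A).hom ≫ (A ◁ μ) = μ ≫ s := by
      rw [hsdef, et_Dright A μ g, ← hudef, hCas, ← hsdef]
      exact hleft'
    have hassoc' : (α_ A A A).inv ≫ (μ ▷ A) ≫ μ = (A ◁ μ) ≫ μ := by
      rw [← hassoc, Iso.inv_hom_id_assoc]
    have hgμ : g ≫ μ = η := by
      have hcyc' := congrArg (· ≫ algTrace A μ) (et_cyc A μ hassoc hcomm g)
      simp only [Category.assoc] at hcyc'
      have t : ((g ≫ μ) ▷ A) ≫ traceForm A μ = (η ▷ A) ≫ traceForm A μ := by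
        rw [traceForm, comp_whiskerRight]
        simp only [Category.assoc]
        rw [hcyc']
        conv_lhs => rw [show μ ≫ algTrace A μ = traceForm A μ from rfl,
          ← et_T A μ hcomm g hc]
        conv_rhs => rw [show μ ≫ algTrace A μ = traceForm A μ from rfl]
        conv_rhs => rw [traceForm, ← Category.assoc, hone]
      rw [← et_mate A μ] at t
      simp only [← Category.assoc] at t
      rw [← comp_whiskerRight, ← comp_whiskerRight] at t
      have t2 := et_inj_e A _ _ t
      exact (Iso.cancel_iso_hom_right (g ≫ μ) η (asIso φ)).mp t2
    have hsμ' : s ≫ μ = 𝟙 A := by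
      rw [hsdef]
      simp only [Category.assoc]
      calc (ρ_ A).inv ≫ (A ◁ g) ≫ (α_ A A A).inv ≫ (μ ▷ A) ≫ μ
          = (ρ_ A).inv ≫ (A ◁ g) ≫ (A ◁ μ) ≫ μ := by rw [hassoc']
        _ = (ρ_ A).inv ≫ (A ◁ (g ≫ μ)) ≫ μ := by
            rw [← MonoidalCategory.whiskerLeft_comp_assoc]
        _ = (ρ_ A).inv ≫ (A ◁ η) ≫ μ := by rw [hgμ]
        _ = 𝟙 A := by rw [hone', Iso.inv_hom_id]
    exact ⟨s, hsμ', hright', hleft'⟩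
end

section
/- Let F : C → D be an exact functor between abelian categories admitting a right adjoint F_*. Assume: C and D have enough projectives; F sends projective objects to projective objects; every projective object of D is injective; and every object of D is a subquotient of F(X) for some object X of C. Then F_* is exact and faithful. -/
open CategoryTheory CategoryTheory.Limits

universe v₁ u₁ v₂ u₂

/-- Let `F : C ⥤ D` be an exact functor between abelian categories with a right adjoint
`G`. Assume `C` and `D` have enough projectives, `F` preserves projective objects, every
projective object of `D` is injective, and every object of `D` is a subquotient of some
`F(X)`. Then the right adjoint `G` is exact and faithful. -/
theorem rightAdjoint_exact_faithful_of_surjective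
    {C : Type u₁} [Category.{v₁} C] [Abelian C]
    {D : Type u₂} [Category.{v₂} D] [Abelian D]
    (F : C ⥤ D) [PreservesFiniteLimits F] [PreservesFiniteColimits F]
    (G : D ⥤ C) (adj : F ⊣ G)
    [EnoughProjectives C] [EnoughProjectives D]
    (hproj : ∀ P : C, Projective P → Projective (F.obj P))
    (hinj : ∀ P : D, Projective P → Injective P)
    (hsurj : ∀ Z : D, ∃ X : C, IsSubquotient Z (F.obj X)) :
    G.Faithful ∧ Nonempty (PreservesFiniteLimits G) ∧ Nonempty (PreservesFiniteColimits G) := by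
  have hRA : G.IsRightAdjoint := ⟨F, ⟨adj⟩⟩
  have hPL : PreservesLimitsOfSize.{0, 0} G := adj.rightAdjoint_preservesLimits
  have hz : G.PreservesZeroMorphisms := inferInstance
  have hadd : G.Additive := Functor.additive_of_preserves_binary_products G
  -- G preserves epimorphisms
  have hepi : G.PreservesEpimorphisms := by
    constructor
    intro X Y f hf
    -- show epi via enough projectives in C
    let P := Projective.over (G.obj Y)
    have hP : Projective P := inferInstance
    have hFP : Projective (F.obj P) := hproj P hP
    let π : P ⟶ G.obj Y := Projective.π (G.obj Y)
    have hπ : Epi π := inferInstance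
    let t : F.obj P ⟶ Y := (adj.homEquiv P Y).symm π
    let l : F.obj P ⟶ X := Projective.factorThru t f
    have hl : l ≫ f = t := Projective.factorThru_comp t f
    have hfac : (adj.homEquiv P X) l ≫ G.map f = π := by
      rw [← Adjunction.homEquiv_naturality_right, hl]
      simp [t]
    have : Epi ((adj.homEquiv P X) l ≫ G.map f) := by rw [hfac]; infer_instance
    exact epi_of_epi ((adj.homEquiv P X) l) (G.map f)
  -- G preserves homology, hence finite colimits
  have hker : ∀ {X Y : D} (f : X ⟶ Y), PreservesLimit (parallelPair f 0) G := fun f =>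
    inferInstance
  have hhom : G.PreservesHomology :=
    Functor.preservesHomology_of_preservesEpis_and_kernels G
  have hPFC : PreservesFiniteColimits G :=
    Functor.preservesFiniteColimits_of_preservesHomology G
  have hPFL : PreservesFiniteLimits G := inferInstance
  -- every object of D is a quotient of some F(X)
  have hquot : ∀ Z : D, ∃ (X : C) (q : F.obj X ⟶ Z), Epi q := by
    intro Z
    -- take a projective cover Q of Z in D
    let Q := Projective.over Z
    have hQ : Projective Q := inferInstance
    let πZ : Q ⟶ Z := Projective.π Z
    have hπZ : Epi πZ := inferInstance
    -- Q is a subquotient of some F(X)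
    obtain ⟨X, S, i, p, hi, hp⟩ := hsurj Q
    -- p : S ⟶ Q epi splits since Q is projective
    haveI := hp
    haveI := hi
    let s : Q ⟶ S := Projective.factorThru (𝟙 Q) p
    have hs : s ≫ p = 𝟙 Q := Projective.factorThru_comp (𝟙 Q) p
    -- so Q ⟶ F X is mono
    have hmono : Mono (s ≫ i) := by
      have : Mono s := mono_of_mono_fac hs
      exact mono_comp s i
    -- Q is injective, so the mono s ≫ i splits
    haveI := hinj Q hQ
    haveI := hmono
    let r : F.obj X ⟶ Q := Injective.factorThru (𝟙 Q) (s ≫ i)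
    have hr : (s ≫ i) ≫ r = 𝟙 Q := Injective.comp_factorThru (𝟙 Q) (s ≫ i)
    have hre : Epi r := epi_of_epi_fac hr
    exact ⟨X, r ≫ πZ, by haveI := hre; exact epi_comp r πZ⟩
  -- counit is epi at every object
  have hcounit : ∀ Z : D, Epi (adj.counit.app Z) := by
    intro Z
    obtain ⟨X, q, hq⟩ := hquot Z
    have : F.map ((adj.homEquiv X Z) q) ≫ adj.counit.app Z = q := by
      simp [Adjunction.homEquiv_unit]
    rw [← this] at hq
    exact epi_of_epi (F.map ((adj.homEquiv X Z) q)) (adj.counit.app Z)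
  -- faithfulness
  have hfaith : G.Faithful := by
    constructor
    intro Z₁ Z₂ f g h
    haveI := hcounit Z₁
    have h1 : adj.counit.app Z₁ ≫ f = adj.counit.app Z₁ ≫ g := by
      have nf := adj.counit.naturality f
      have ng := adj.counit.naturality g
      simp only [Functor.comp_map, Functor.id_map] at nf ng
      rw [← nf, ← ng, h]
    exact (cancel_epi (adj.counit.app Z₁)).mp h1
  exact ⟨hfaith, ⟨hPFL⟩, ⟨hPFC⟩⟩
end
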